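/- Let α > 0, λ ∈ (0,1), d ≥ 2, and β > d + α. Define a sequence (a_j) of positive integers with a_1 = K⁴ and a_{j+1} = ⌊(1+λ) a_j⌋ + 1. Suppose (q_j) is a sequence in [0,1] satisfying q_1 ≤ 2^{-α a_1} and the recursion q_j ≤ C(e^{-K a_j} + 2^{2dλ a_{j-1}} q_{j-1}² + 2^{(d-β)λ a_{j-1}} q_{j-1}) for all j ≥ 2. If λ < α/(2d + α), d - β < -α, and K is sufficiently large (depending on C, α, λ, β, d), then q_j ≤ 2^{-α a_j} for all j ≥ 1. -/
import Mathlib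


namespace Stmt14

open Filter Real

private lemma ev_rpow (c ε α' : ℝ) (hε : ε < 0) :
    ∀ᶠ K : ℕ in atTop, c * (2:ℝ) ^ (ε * K + α') ≤ 1/3 := by
  have h1 : Tendsto (fun K : ℕ => ε * (K:ℝ) + α') atTop atBot := by
    apply Filter.tendsto_atBot_add_const_right
    exact Tendsto.const_mul_atTop_of_neg hε tendsto_natCast_atTop_atTop
  have h2 : Tendsto (fun K : ℕ => c * (2:ℝ) ^ (ε * (K:ℝ) + α')) atTop (nhds 0) := by
    have h3 : Tendsto (fun x : ℝ => c * (2:ℝ) ^ x) atBot (nhds 0) := by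
      have : Tendsto (fun x : ℝ => (2:ℝ) ^ x) atBot (nhds 0) := by
        simp only [Real.rpow_def_of_pos (by norm_num : (0:ℝ) < 2)]
        exact Real.tendsto_exp_atBot.comp
          (tendsto_id.const_mul_atBot (by positivity : (0:ℝ) < Real.log 2))
      simpa using this.const_mul c
    exact h3.comp h1
  exact h2.eventually_le_const (by norm_num : (0:ℝ) < 1/3)

private lemma ev_exp (c : ℝ) :
    ∀ᶠ K : ℕ in atTop, c * Real.exp (-(K:ℝ)) ≤ 1/3 := by
  have h2 : Tendsto (fun K : ℕ => c * Real.exp (-(K:ℝ))) atTop (nhds 0) := by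
    have : Tendsto (fun K : ℕ => Real.exp (-(K:ℝ))) atTop (nhds 0) :=
      Real.tendsto_exp_atBot.comp (tendsto_neg_atBot_iff.mpr tendsto_natCast_atTop_atTop)
    simpa using this.const_mul c
  exact h2.eventually_le_const (by norm_num : (0:ℝ) < 1/3)

set_option maxHeartbeats 1000000 in
/-- (Induction for probabilities of bad boxes.)  Let `α > 0`,
`λ ∈ (0,1)`, `d ≥ 2`, `β > d + α`, `C > 0` with `λ < α/(2d + α)` and `d - β < -α`.
Then for all sufficiently large `K` (depending on `C, α, λ, β, d`): if `a_1 = K⁴`,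
`a_{j+1} = ⌊(1+λ)a_j⌋ + 1`, the `q_j ∈ [0,1]` satisfy `q_1 ≤ 2^{-α a_1}` and, for
`j ≥ 2`, `q_j ≤ C(e^{-K a_j} + 2^{2dλ a_{j-1}} q_{j-1}² + 2^{(d-β)λ a_{j-1}} q_{j-1})`,
then `q_j ≤ 2^{-α a_j}` for all `j ≥ 1`. -/
theorem stmt14 (d : ℕ) (hd : 2 ≤ d) (α lam β C : ℝ)
    (hα : 0 < α) (hlam0 : 0 < lam) (hlam1 : lam < 1)
    (hβ : (d : ℝ) + α < β)
    (hlam : lam < α / (2 * (d : ℝ) + α)) (hdβ : (d : ℝ) - β < -α) (hC : 0 < C) :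
    ∃ K₀ : ℕ, ∀ K : ℕ, K₀ ≤ K →
      ∀ (a : ℕ → ℕ) (q : ℕ → ℝ),
        a 1 = K ^ 4 →
        (∀ j : ℕ, 1 ≤ j → (a (j + 1) : ℤ) = ⌊(1 + lam) * (a j : ℝ)⌋ + 1) →
        (∀ j : ℕ, 0 ≤ q j ∧ q j ≤ 1) →
        q 1 ≤ (2 : ℝ) ^ (-(α * (a 1 : ℝ))) →
        (∀ j : ℕ, 2 ≤ j →
          q j ≤ C * (Real.exp (-(K : ℝ) * (a j : ℝ)) +
            (2 : ℝ) ^ (2 * (d : ℝ) * lam * (a (j - 1) : ℝ)) * q (j - 1) ^ 2 +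
            (2 : ℝ) ^ (((d : ℝ) - β) * lam * (a (j - 1) : ℝ)) * q (j - 1))) →
        ∀ j : ℕ, 1 ≤ j → q j ≤ (2 : ℝ) ^ (-(α * (a j : ℝ))) := by
  set ε₁ : ℝ := 2 * d * lam - 2 * α + α * (1 + lam) with hε₁def
  set ε₂ : ℝ := lam * ((d : ℝ) - β + α) with hε₂def
  have hdpos : (0:ℝ) < 2 * (d : ℝ) + α := by positivity
  have hε₁ : ε₁ < 0 := by
    have h := (lt_div_iff₀ hdpos).mp hlam
    nlinarith
  have hε₂ : ε₂ < 0 := mul_neg_of_pos_of_neg hlam0 (by linarith)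
  have hEV : ∀ᶠ K : ℕ in atTop,
      (1 ≤ K ∧ α * Real.log 2 + 1 ≤ (K:ℝ)) ∧
      (C * Real.exp (-(K:ℝ)) ≤ 1/3 ∧ C * (2:ℝ) ^ (ε₁ * K + α) ≤ 1/3) ∧
      C * (2:ℝ) ^ (ε₂ * K + α) ≤ 1/3 := by
    refine (Filter.Eventually.and ?_ ?_).and ((Filter.Eventually.and ?_ ?_).and ?_)
    · exact eventually_ge_atTop 1
    · exact tendsto_natCast_atTop_atTop.eventually_ge_atTop _
    · exact ev_exp C
    · exact ev_rpow C ε₁ α hε₁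
    · exact ev_rpow C ε₂ α hε₂
  obtain ⟨K₀, hK₀⟩ := eventually_atTop.mp hEV
  refine ⟨K₀, fun K hK a q ha1 harec hq01 hq1 hqrec => ?_⟩
  obtain ⟨⟨hK1, hKlog⟩, ⟨hE2, hE3⟩, hE4⟩ := hK₀ K hK
  -- basic growth facts about a
  have hup : ∀ j : ℕ, 1 ≤ j → (a (j+1) : ℝ) ≤ (1 + lam) * (a j : ℝ) + 1 := by
    intro j hj
    have h := harec j hj
    have h2 : ((a (j+1) : ℤ) : ℝ) = (⌊(1 + lam) * (a j : ℝ)⌋ : ℝ) + 1 := by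
      exact_mod_cast congrArg (fun z : ℤ => (z : ℝ)) h
    push_cast at h2
    have := Int.floor_le ((1 + lam) * (a j : ℝ))
    linarith
  have hmono : ∀ j : ℕ, 1 ≤ j → a j ≤ a (j+1) := by
    intro j hj
    have h := harec j hj
    have hfl : (a j : ℤ) ≤ ⌊(1 + lam) * (a j : ℝ)⌋ := by
      rw [show ((a j : ℤ)) = ⌊((a j : ℕ) : ℝ)⌋ by simp]
      apply Int.floor_le_floor
      nlinarith [Nat.cast_nonneg (α := ℝ) (a j), hlam0]
    omega
  have haK : ∀ j : ℕ, 1 ≤ j → K ≤ a j := by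
    intro j hj
    induction j, hj using Nat.le_induction with
    | base => rw [ha1]; exact Nat.le_self_pow (by norm_num) K
    | succ n hn ih => exact le_trans ih (hmono n hn)
  have hlow : ∀ j : ℕ, 1 ≤ j → (a j : ℝ) ≤ (a (j+1) : ℝ) := by
    intro j hj; exact_mod_cast hmono j hj
  -- the main induction
  intro j hj
  induction j, hj using Nat.le_induction with
  | base => exact hq1
  | succ n hn ih =>
    have hrec := hqrec (n+1) (by omega)
    simp only [Nat.add_sub_cancel] at hrec
    set A : ℝ := (a n : ℝ) with hA
    set B : ℝ := (a (n+1) : ℝ) with hB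
    have hKA : (K:ℝ) ≤ A := by rw [hA]; exact_mod_cast haK n hn
    have hAB : A ≤ B := hlow n hn
    have hBup : B ≤ (1 + lam) * A + 1 := hup n hn
    have hq0 := (hq01 n).1
    have h2pos : (0:ℝ) < 2 := by norm_num
    have h12 : (1:ℝ) ≤ 2 := by norm_num
    -- Term 1 bound
    have hT1 : C * Real.exp (-(K:ℝ) * B) ≤ 1/3 * (2:ℝ) ^ (-(α * B)) := by
      have hBexp : (2:ℝ) ^ (-(α * B)) = Real.exp (Real.log 2 * (-(α * B))) :=
        Real.rpow_def_of_pos h2pos _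
      have hsplit : -(K:ℝ) * B = (α * Real.log 2 - K) * B + Real.log 2 * (-(α * B)) := by
        ring
      rw [hsplit, Real.exp_add, hBexp, ← mul_assoc]
      apply mul_le_mul_of_nonneg_right _ (Real.exp_nonneg _)
      have hB1 : (K:ℝ) ≤ B := le_trans hKA hAB
      have hstep : (α * Real.log 2 - K) * B ≤ -(K:ℝ) := by
        have h1 : (α * Real.log 2 - K) * B ≤ (-1) * B := by
          apply mul_le_mul_of_nonneg_right (by linarith) (by linarith)
        linarith
      calc C * Real.exp ((α * Real.log 2 - K) * B)
          ≤ C * Real.exp (-(K:ℝ)) :=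
            mul_le_mul_of_nonneg_left (Real.exp_le_exp.mpr hstep) hC.le
        _ ≤ 1/3 := hE2
    -- generic bound for terms 2 and 3: C * 2^(ε*A + α) * 2^(-(α*((1+lam)*A+1))) ≤ 1/3 * 2^(-(α*B))
    have hgen : ∀ ε : ℝ, ε < 0 → C * (2:ℝ) ^ (ε * K + α) ≤ 1/3 →
        C * (2:ℝ) ^ (ε * A + α + -(α * ((1 + lam) * A + 1))) ≤ 1/3 * (2:ℝ) ^ (-(α * B)) := by
      intro ε hε hEK
      rw [Real.rpow_add h2pos]
      have h1 : C * (2:ℝ) ^ (ε * A + α) ≤ 1/3 := by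
        refine le_trans (mul_le_mul_of_nonneg_left ?_ hC.le) hEK
        apply Real.rpow_le_rpow_of_exponent_le h12
        have := mul_le_mul_of_nonpos_left hKA hε.le
        linarith
      have h2 : (2:ℝ) ^ (-(α * ((1 + lam) * A + 1))) ≤ (2:ℝ) ^ (-(α * B)) := by
        apply Real.rpow_le_rpow_of_exponent_le h12
        have := mul_le_mul_of_nonneg_left hBup hα.le
        linarith
      calc C * ((2:ℝ) ^ (ε * A + α) * (2:ℝ) ^ (-(α * ((1 + lam) * A + 1))))
          = (C * (2:ℝ) ^ (ε * A + α)) * (2:ℝ) ^ (-(α * ((1 + lam) * A + 1))) := by ring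
        _ ≤ 1/3 * (2:ℝ) ^ (-(α * B)) :=
            mul_le_mul h1 h2 (Real.rpow_nonneg (by norm_num) _) (by norm_num)
    -- Term 2
    have hT2 : C * ((2:ℝ) ^ (2 * (d:ℝ) * lam * A) * q n ^ 2) ≤ 1/3 * (2:ℝ) ^ (-(α * B)) := by
      have hq2 : q n ^ 2 ≤ ((2:ℝ) ^ (-(α * A))) ^ 2 := pow_le_pow_left₀ hq0 ih 2
      have hcollapse : (2:ℝ) ^ (2 * (d:ℝ) * lam * A) * ((2:ℝ) ^ (-(α * A))) ^ 2
          = (2:ℝ) ^ (ε₁ * A + α + -(α * ((1 + lam) * A + 1))) := by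
        rw [← Real.rpow_natCast ((2:ℝ) ^ (-(α * A))) 2, ← Real.rpow_mul (by norm_num),
          ← Real.rpow_add h2pos]
        congr 1
        push_cast
        rw [hε₁def]; ring
      calc C * ((2:ℝ) ^ (2 * (d:ℝ) * lam * A) * q n ^ 2)
          ≤ C * ((2:ℝ) ^ (2 * (d:ℝ) * lam * A) * ((2:ℝ) ^ (-(α * A))) ^ 2) := by
            apply mul_le_mul_of_nonneg_left _ hC.le
            exact mul_le_mul_of_nonneg_left hq2 (Real.rpow_nonneg (by norm_num) _)
        _ = C * (2:ℝ) ^ (ε₁ * A + α + -(α * ((1 + lam) * A + 1))) := by rw [hcollapse]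
        _ ≤ 1/3 * (2:ℝ) ^ (-(α * B)) := hgen ε₁ hε₁ hE3
    -- Term 3
    have hT3 : C * ((2:ℝ) ^ (((d:ℝ) - β) * lam * A) * q n) ≤ 1/3 * (2:ℝ) ^ (-(α * B)) := by
      have hcollapse : (2:ℝ) ^ (((d:ℝ) - β) * lam * A) * (2:ℝ) ^ (-(α * A))
          = (2:ℝ) ^ (ε₂ * A + α + -(α * ((1 + lam) * A + 1))) := by
        rw [← Real.rpow_add h2pos]
        congr 1
        rw [hε₂def]; ring
      calc C * ((2:ℝ) ^ (((d:ℝ) - β) * lam * A) * q n)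
          ≤ C * ((2:ℝ) ^ (((d:ℝ) - β) * lam * A) * (2:ℝ) ^ (-(α * A))) := by
            apply mul_le_mul_of_nonneg_left _ hC.le
            exact mul_le_mul_of_nonneg_left ih (Real.rpow_nonneg (by norm_num) _)
        _ = C * (2:ℝ) ^ (ε₂ * A + α + -(α * ((1 + lam) * A + 1))) := by rw [hcollapse]
        _ ≤ 1/3 * (2:ℝ) ^ (-(α * B)) := hgen ε₂ hε₂ hE4
    calc q (n+1) ≤ C * (Real.exp (-(K:ℝ) * B) +
            (2:ℝ) ^ (2 * (d:ℝ) * lam * A) * q n ^ 2 +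
            (2:ℝ) ^ (((d:ℝ) - β) * lam * A) * q n) := hrec
      _ = C * Real.exp (-(K:ℝ) * B) + C * ((2:ℝ) ^ (2 * (d:ℝ) * lam * A) * q n ^ 2)
          + C * ((2:ℝ) ^ (((d:ℝ) - β) * lam * A) * q n) := by ring
      _ ≤ 1/3 * (2:ℝ) ^ (-(α * B)) + 1/3 * (2:ℝ) ^ (-(α * B)) + 1/3 * (2:ℝ) ^ (-(α * B)) := by
          linarith
      _ = (2:ℝ) ^ (-(α * B)) := by ring

end Stmt14
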